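/- Let n ≥ 2 and let G be a group containing elements s₁, …, s_{n-1} satisfying the commutation relations s_i s_j = s_j s_i whenever |i - j| ≥ 2, and the Yang–Baxter (braid) relations s_i s_{i+1} s_i = s_{i+1} s_i s_{i+1} for 1 ≤ i ≤ n-2. For 1 ≤ i < j ≤ n define the band a_{i,j} := (s_i s_{i+1} ⋯ s_{j-2}) · s_{j-1} · (s_i s_{i+1} ⋯ s_{j-2})⁻¹ (the conjugating product being empty when j = i+1, so that a_{i,i+1} = s_i), and for 1 ≤ k ≤ n-1 set γ_k := s₁ s₂ ⋯ s_k. Let τ_k : {1,…,n} → {1,…,n} be the cycle defined by τ_k(i) = i+1 for 1 ≤ i ≤ k, τ_k(k+1) = 1, and τ_k(i) = i for i > k+1. Then for all 1 ≤ k ≤ n-1 and all 1 ≤ i < j ≤ n such that it is NOT the case that i < k+1 < j, one has γ_k · a_{i,j} = a_{i',j'} · γ_k, where {i', j'} = {τ_k(i), τ_k(j)} with i' < j'. -/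

import Mathlib

/-- The word `s_i s_{i+1} ⋯ s_{j-2}` (the empty product when `j = i + 1`). -/
def bandConj {G : Type*} [Group G] (s : ℕ → G) (i j : ℕ) : G :=
  ((List.range' i (j - 1 - i)).map s).prod

/-- The band `a_{i,j} = (s_i s_{i+1} ⋯ s_{j-2}) · s_{j-1} · (s_i s_{i+1} ⋯ s_{j-2})⁻¹`,
so that `a_{i,i+1} = s_i`. -/
def band {G : Type*} [Group G] (s : ℕ → G) (i j : ℕ) : G :=
  bandConj s i j * s (j - 1) * (bandConj s i j)⁻¹

/-- The word `γ_k = s₁ s₂ ⋯ s_k`. -/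
def gammaWord {G : Type*} [Group G] (s : ℕ → G) (k : ℕ) : G :=
  ((List.range' 1 k).map s).prod

/-- The cycle `τ_k`: `τ_k(i) = i + 1` for `1 ≤ i ≤ k`, `τ_k(k+1) = 1`, and
`τ_k(i) = i` for `i > k + 1`. -/
def tauCycle (k i : ℕ) : ℕ :=
  if 1 ≤ i ∧ i ≤ k then i + 1 else if i = k + 1 then 1 else i

/- ### Auxiliary lemmas -/

theorem prodS_append {G : Type*} [Group G] (s : ℕ → G) (a b c : ℕ) :
    ((List.range' a b).map s).prod * ((List.range' (a + b) c).map s).prod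
      = ((List.range' a (c + b)).map s).prod := by
  rw [← List.prod_append, ← List.map_append, List.range'_append_1, Nat.add_comm b c]

theorem prodS_concat {G : Type*} [Group G] (s : ℕ → G) (a b : ℕ) :
    ((List.range' a (b + 1)).map s).prod = ((List.range' a b).map s).prod * s (a + b) := by
  rw [List.range'_1_concat, List.map_append, List.prod_append]
  simp

theorem commute_prodS {G : Type*} [Group G] (s : ℕ → G) (g : G) (a b : ℕ)
    (h : ∀ t, a ≤ t → t < a + b → Commute g (s t)) :
    Commute g (((List.range' a b).map s).prod) := by
  apply Commute.list_prod_right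
  intro x hx
  simp only [List.mem_map, List.mem_range'_1] at hx
  obtain ⟨t, ⟨ht1, ht2⟩, rfl⟩ := hx
  exact h t ht1 ht2

theorem conj_push' {G : Type*} [Group G] {g c c' x y : G} (hc : g * c = c' * g)
    (hx : g * x = y * g) :
    g * (c * x * c⁻¹) = c' * y * c'⁻¹ * g := by
  have hc2 : c' = g * c * g⁻¹ := by rw [hc]; group
  have hcinv : g * c⁻¹ = c'⁻¹ * g := by rw [hc2]; group
  calc g * (c * x * c⁻¹) = (g * c) * x * c⁻¹ := by group
    _ = c' * (g * x) * c⁻¹ := by rw [hc]; group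
    _ = c' * (y * g) * c⁻¹ := by rw [hx]
    _ = c' * y * (g * c⁻¹) := by group
    _ = c' * y * (c'⁻¹ * g) := by rw [hcinv]
    _ = c' * y * c'⁻¹ * g := by group

theorem bandConj_concat {G : Type*} [Group G] (s : ℕ → G) {i j : ℕ} (h : i + 2 ≤ j) :
    bandConj s i j = bandConj s i (j - 1) * s (j - 2) := by
  unfold bandConj
  have h3 : j - 1 - 1 - i = j - 2 - i := by omega
  have h1 : j - 1 - i = (j - 2 - i) + 1 := by omega
  have h2 : i + (j - 2 - i) = j - 2 := by omega
  rw [h3, h1, List.range'_1_concat, h2]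
  simp

theorem band_adj {G : Type*} [Group G] (s : ℕ → G) (i : ℕ) : band s i (i + 1) = s i := by
  unfold band bandConj
  simp

/-- In a group with elements `s₁, …, s_{n-1}` satisfying the commutation and
Yang–Baxter (braid) relations, for `1 ≤ k ≤ n-1` and `1 ≤ i < j ≤ n` such that
it is not the case that `i < k+1 < j`, the band `a_{i,j}` conjugates past `γ_k`
according to the cycle `τ_k`:
`γ_k · a_{i,j} = a_{i',j'} · γ_k` where `{i', j'} = {τ_k(i), τ_k(j)}`, `i' < j'`. -/
theorem stmt_10 {G : Type*} [Group G] (n : ℕ) (hn : 2 ≤ n) (s : ℕ → G)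
    (hcomm : ∀ i j, 1 ≤ i → 1 ≤ j → i ≤ n - 1 → j ≤ n - 1 →
      (i + 2 ≤ j ∨ j + 2 ≤ i) → s i * s j = s j * s i)
    (hyb : ∀ i, 1 ≤ i → i ≤ n - 2 →
      s i * s (i + 1) * s i = s (i + 1) * s i * s (i + 1))
    (k i j : ℕ) (hk1 : 1 ≤ k) (hkn : k ≤ n - 1)
    (hi1 : 1 ≤ i) (hij : i < j) (hjn : j ≤ n)
    (hnot : ¬(i < k + 1 ∧ k + 1 < j)) :
    gammaWord s k * band s i j =
      band s (min (tauCycle k i) (tauCycle k j)) (max (tauCycle k i) (tauCycle k j)) *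
        gammaWord s k := by
  -- basic commutation in `Commute` form
  have hsc : ∀ a b : ℕ, 1 ≤ a → b ≤ n - 1 → a + 2 ≤ b → Commute (s a) (s b) := by
    intro a b ha hb hab
    exact hcomm a b ha (by omega) (by omega) hb (Or.inl hab)
  -- key single-generator lemma: `s_{q-1}` moves `band i q` to `band i (q-1)`
  have L4 : ∀ p q : ℕ, 1 ≤ p → p + 2 ≤ q → q ≤ n →
      s (q - 1) * band s p q = band s p (q - 1) * s (q - 1) := by
    intro p q hp hpq hq
    have hb := hyb (q - 2) (by omega) (by omega)
    have e1 : q - 2 + 1 = q - 1 := by omega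
    rw [e1] at hb
    have hC : Commute (s (q - 1)) (bandConj s p (q - 1)) :=
      commute_prodS s (s (q - 1)) p (q - 1 - 1 - p)
        (fun t ht1 ht2 => (hsc t (q - 1) (by omega) (by omega) (by omega)).symm)
    have key : s (q - 1) * (s (q - 2) * s (q - 1) * (s (q - 2))⁻¹) = s (q - 2) * s (q - 1) := by
      calc s (q - 1) * (s (q - 2) * s (q - 1) * (s (q - 2))⁻¹)
          = (s (q - 1) * s (q - 2) * s (q - 1)) * (s (q - 2))⁻¹ := by group
        _ = (s (q - 2) * s (q - 1) * s (q - 2)) * (s (q - 2))⁻¹ := by rw [hb]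
        _ = s (q - 2) * s (q - 1) := by group
    have hsplit : band s p q =
        bandConj s p (q - 1) * (s (q - 2) * s (q - 1) * (s (q - 2))⁻¹) *
          (bandConj s p (q - 1))⁻¹ := by
      rw [band, bandConj_concat s hpq]
      group
    rw [hsplit, band, show q - 1 - 1 = q - 2 by omega]
    exact conj_push' hC.eq key
  -- the gamma word shifts generators below `k`
  have G1 : ∀ m, 1 ≤ m → m + 1 ≤ k → gammaWord s k * s m = s (m + 1) * gammaWord s k := by
    intro m hm hmk
    have hd1 : gammaWord s k =
        ((List.range' 1 (m - 1)).map s).prod *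
          (s m * (s (m + 1) * ((List.range' (m + 2) (k - m - 1)).map s).prod)) := by
      have h2 : ((List.range' m ((k - m - 1) + 2)).map s).prod
          = s m * (s (m + 1) * ((List.range' (m + 2) (k - m - 1)).map s).prod) := by
        rw [show (k - m - 1) + 2 = (k - m - 1) + 1 + 1 from rfl, List.range'_succ,
          List.map_cons, List.prod_cons, List.range'_succ, List.map_cons, List.prod_cons,
          show m + 1 + 1 = m + 2 from rfl]
      have h1 := prodS_append s 1 (m - 1) ((k - m - 1) + 2)
      rw [show 1 + (m - 1) = m by omega, show (k - m - 1) + 2 + (m - 1) = k by omega] at h1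
      unfold gammaWord
      rw [← h1, h2]
    set A := ((List.range' 1 (m - 1)).map s).prod with hAdef
    set Q := ((List.range' (m + 2) (k - m - 1)).map s).prod with hQdef
    have hQ : Commute (s m) Q := by
      rw [hQdef]
      exact commute_prodS s (s m) (m + 2) (k - m - 1)
        (fun t ht1 ht2 => hsc m t hm (by omega) (by omega))
    have hP : Commute (s (m + 1)) A := by
      rw [hAdef]
      exact commute_prodS s (s (m + 1)) 1 (m - 1)
        (fun t ht1 ht2 => (hsc t (m + 1) (by omega) (by omega) (by omega)).symm)
    have hbm := hyb m (by omega) (by omega)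
    calc gammaWord s k * s m
        = A * (s m * s (m + 1) * (Q * s m)) := by rw [hd1]; group
      _ = A * (s m * s (m + 1) * (s m * Q)) := by rw [← hQ.eq]
      _ = A * (s m * s (m + 1) * s m) * Q := by group
      _ = A * (s (m + 1) * s m * s (m + 1)) * Q := by rw [hbm]
      _ = A * s (m + 1) * (s m * (s (m + 1) * Q)) := by group
      _ = s (m + 1) * A * (s m * (s (m + 1) * Q)) := by rw [← hP.eq]
      _ = s (m + 1) * gammaWord s k := by rw [hd1]; group
  by_cases hik : i ≤ k
  · have hjk : j ≤ k + 1 := by omega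
    by_cases hjk' : j ≤ k
    · -- Case A1 : i < j ≤ k
      have Gshift : ∀ L : List ℕ, (∀ t ∈ L, 1 ≤ t ∧ t + 1 ≤ k) →
          gammaWord s k * (L.map s).prod
            = ((L.map (fun t => t + 1)).map s).prod * gammaWord s k := by
        intro L
        induction L with
        | nil => simp
        | cons a L ih =>
          intro h
          obtain ⟨ha1, ha2⟩ := h a List.mem_cons_self
          have hih := ih (fun t ht => h t (List.mem_cons_of_mem a ht))
          simp only [List.map_cons, List.prod_cons]
          calc gammaWord s k * (s a * (L.map s).prod)
              = (gammaWord s k * s a) * (L.map s).prod := by rw [mul_assoc]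
            _ = (s (a + 1) * gammaWord s k) * (L.map s).prod := by rw [G1 a ha1 ha2]
            _ = s (a + 1) * (gammaWord s k * (L.map s).prod) := by rw [mul_assoc]
            _ = s (a + 1) * (((L.map (fun t => t + 1)).map s).prod * gammaWord s k) := by
                rw [hih]
            _ = s (a + 1) * ((L.map (fun t => t + 1)).map s).prod * gammaWord s k := by
                rw [mul_assoc]
      have hCs : gammaWord s k * bandConj s i j = bandConj s (i + 1) (j + 1) * gammaWord s k := by
        have hGL := Gshift (List.range' i (j - 1 - i)) (by
          intro t ht
          simp only [List.mem_range'_1] at ht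
          exact ⟨by omega, by omega⟩)
        have emap : (List.range' i (j - 1 - i)).map (fun t => t + 1)
            = List.range' (i + 1) (j + 1 - 1 - (i + 1)) := by
          rw [show (fun t => t + 1) = (fun t => 1 + t) from funext fun t => by omega,
            List.map_add_range']
          congr 1 <;> omega
        rw [emap] at hGL
        exact hGL
      have hgs : gammaWord s k * s (j - 1) = s j * gammaWord s k := by
        have := G1 (j - 1) (by omega) (by omega)
        rw [show j - 1 + 1 = j by omega] at this
        exact this
      have ht1 : tauCycle k i = i + 1 := by unfold tauCycle; split_ifs <;> omega
      have ht2 : tauCycle k j = j + 1 := by unfold tauCycle; split_ifs <;> omega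
      rw [ht1, ht2, min_eq_left (by omega), max_eq_right (by omega), band, band,
        show j + 1 - 1 = j by omega]
      exact conj_push' hCs hgs
    · -- Case A2 : i ≤ k, j = k + 1
      have hj : j = k + 1 := by omega
      subst hj
      have chain : ∀ d, d ≤ k - i →
          ((List.range' (k - d + 1) d).map s).prod * band s i (k + 1)
            = band s i (k - d + 1) * ((List.range' (k - d + 1) d).map s).prod := by
        intro d
        induction d with
        | zero => intro _; simp
        | succ d ih =>
          intro hd
          have hd' : d ≤ k - i := by omega
          rw [show k - (d + 1) + 1 = k - d by omega, List.range'_succ, List.map_cons,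
            List.prod_cons]
          have hL := L4 i (k - d + 1) hi1 (by omega) (by omega)
          rw [show k - d + 1 - 1 = k - d by omega] at hL
          calc s (k - d) * ((List.range' (k - d + 1) d).map s).prod * band s i (k + 1)
              = s (k - d) * (((List.range' (k - d + 1) d).map s).prod * band s i (k + 1)) := by
                rw [mul_assoc]
            _ = s (k - d) * (band s i (k - d + 1) * ((List.range' (k - d + 1) d).map s).prod) := by
                rw [ih hd']
            _ = (s (k - d) * band s i (k - d + 1)) * ((List.range' (k - d + 1) d).map s).prod := by
                rw [mul_assoc]
            _ = (band s i (k - d) * s (k - d)) * ((List.range' (k - d + 1) d).map s).prod := by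
                rw [hL]
            _ = band s i (k - d) * (s (k - d) * ((List.range' (k - d + 1) d).map s).prod) := by
                rw [mul_assoc]
      have hchain := chain (k - i) le_rfl
      rw [show k - (k - i) + 1 = i + 1 by omega, band_adj] at hchain
      have hγ : gammaWord s k =
          ((List.range' 1 i).map s).prod * ((List.range' (i + 1) (k - i)).map s).prod := by
        have h1 := prodS_append s 1 i (k - i)
        rw [show 1 + i = i + 1 by omega, show k - i + i = k by omega] at h1
        unfold gammaWord
        exact h1.symm
      have hB : ((List.range' 1 i).map s).prod
          = ((List.range' 1 (i - 1)).map s).prod * s i := by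
        have h1 := prodS_concat s 1 (i - 1)
        rw [show (i - 1) + 1 = i by omega, show 1 + (i - 1) = i by omega] at h1
        exact h1
      have hband1 : band s 1 (i + 1) =
          ((List.range' 1 (i - 1)).map s).prod * s i *
            (((List.range' 1 (i - 1)).map s).prod)⁻¹ := by
        unfold band bandConj
        rw [show i + 1 - 1 - 1 = i - 1 by omega, show i + 1 - 1 = i by omega]
      have ht1 : tauCycle k i = i + 1 := by unfold tauCycle; split_ifs <;> omega
      have ht2 : tauCycle k (k + 1) = 1 := by unfold tauCycle; split_ifs <;> omega
      rw [ht1, ht2, min_eq_right (by omega), max_eq_left (by omega), hband1, hγ, hB]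
      calc ((List.range' 1 (i - 1)).map s).prod * s i *
            ((List.range' (i + 1) (k - i)).map s).prod * band s i (k + 1)
          = ((List.range' 1 (i - 1)).map s).prod * s i *
            (((List.range' (i + 1) (k - i)).map s).prod * band s i (k + 1)) := by
            rw [mul_assoc]
        _ = ((List.range' 1 (i - 1)).map s).prod * s i *
            (s i * ((List.range' (i + 1) (k - i)).map s).prod) := by rw [hchain]
        _ = ((List.range' 1 (i - 1)).map s).prod * s i *
              (((List.range' 1 (i - 1)).map s).prod)⁻¹ *
            (((List.range' 1 (i - 1)).map s).prod * s i *
              ((List.range' (i + 1) (k - i)).map s).prod) := by group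
  · by_cases hik2 : i = k + 1
    · -- Case B1 : i = k + 1 < j
      subst hik2
      have hsplitC : bandConj s 1 j = gammaWord s k * bandConj s (k + 1) j := by
        have h1 := prodS_append s 1 k (j - 1 - (k + 1))
        rw [show 1 + k = k + 1 by omega, show j - 1 - (k + 1) + k = j - 1 - 1 by omega] at h1
        unfold gammaWord bandConj
        exact h1.symm
      have ht1 : tauCycle k (k + 1) = 1 := by unfold tauCycle; split_ifs <;> omega
      have ht2 : tauCycle k j = j := by unfold tauCycle; split_ifs <;> omega
      rw [ht1, ht2, min_eq_left (by omega), max_eq_right (by omega), band, band, hsplitC]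
      group
    · -- Case B2 : k + 1 < i, everything commutes
      have hgen : ∀ u, k + 2 ≤ u → u ≤ n - 1 → Commute (gammaWord s k) (s u) := by
        intro u hu1 hu2
        have h := commute_prodS s (s u) 1 k (fun t ht1 ht2 => (hsc t u ht1 hu2 (by omega)).symm)
        exact h.symm
      have h1 : Commute (gammaWord s k) (bandConj s i j) :=
        commute_prodS s (gammaWord s k) i (j - 1 - i)
          (fun t ht1 ht2 => hgen t (by omega) (by omega))
      have h2 : Commute (gammaWord s k) (s (j - 1)) := hgen (j - 1) (by omega) (by omega)
      have hcom : Commute (gammaWord s k) (band s i j) := by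
        unfold band
        exact (h1.mul_right h2).mul_right h1.inv_right
      have ht1 : tauCycle k i = i := by unfold tauCycle; split_ifs <;> omega
      have ht2 : tauCycle k j = j := by unfold tauCycle; split_ifs <;> omega
      rw [ht1, ht2, min_eq_left (by omega), max_eq_right (by omega)]
      exact hcom.eq
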